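/- Let b ∈ ℂ with |b| ≤ √2/4, β = sqrt(1 - |b|^2), and let Ĉ be either (1/β)[[β, -b],[0,1]] or (1/β)[[1,0],[-conj(b), β]]. Then ‖Ĉ - I_2‖_F^2 = (1/β - 1)^2 + |b|^2/β^2, and consequently ‖Ĉ - I_2‖_F ≤ 1.1·|b|. -/

import Mathlib

open Matrix

/-- Squared Frobenius norm of a 2×2 complex matrix. -/
noncomputable def frobSq (M : Matrix (Fin 2) (Fin 2) ℂ) : ℝ :=
  ∑ i : Fin 2, ∑ j : Fin 2, ‖M i j‖ ^ 2

theorem stmt_12 (b : ℂ) (hb : ‖b‖ ≤ Real.sqrt 2 / 4) (β : ℝ)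
    (hβ : β = Real.sqrt (1 - ‖b‖ ^ 2))
    (C : Matrix (Fin 2) (Fin 2) ℂ)
    (hC : C = (β : ℂ)⁻¹ • !![(β : ℂ), -b; 0, 1] ∨
          C = (β : ℂ)⁻¹ • !![1, 0; -(starRingEnd ℂ b), (β : ℂ)]) :
    frobSq (C - 1) = (1 / β - 1) ^ 2 + ‖b‖ ^ 2 / β ^ 2 ∧
      Real.sqrt (frobSq (C - 1)) ≤ 1.1 * ‖b‖ := by
  set t := ‖b‖ with ht
  have ht0 : 0 ≤ t := norm_nonneg b
  have ht2 : t ^ 2 ≤ 1 / 8 := by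
    have h2 : (Real.sqrt 2 / 4) ^ 2 = 1 / 8 := by
      rw [div_pow, Real.sq_sqrt (by norm_num : (2:ℝ) ≥ 0)]; norm_num
    calc t ^ 2 ≤ (Real.sqrt 2 / 4) ^ 2 := by
          apply pow_le_pow_left₀ ht0 hb
      _ = 1 / 8 := h2
  have hβsq : β ^ 2 = 1 - t ^ 2 := by
    rw [hβ, Real.sq_sqrt]; linarith
  have hβ0 : 0 < β := by
    rw [hβ]; apply Real.sqrt_pos.mpr; linarith
  have hβ1 : β ≤ 1 := by
    nlinarith [sq_nonneg (β - 1)]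
  have hβ93 : (0.93 : ℝ) ≤ β := by
    nlinarith
  have hβc : (β : ℂ) ≠ 0 := by
    exact_mod_cast hβ0.ne'
  -- value of frobSq
  have habs : ‖(β : ℂ)⁻¹ - 1‖ ^ 2 = (1 / β - 1) ^ 2 := by
    have : (β : ℂ)⁻¹ - 1 = ((1 / β - 1 : ℝ) : ℂ) := by push_cast; rw [one_div]
    rw [this, Complex.norm_real, Real.norm_eq_abs, sq_abs]
  have hmain : frobSq (C - 1) = (1 / β - 1) ^ 2 + t ^ 2 / β ^ 2 := by
    rcases hC with rfl | rfl <;>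
      simp only [frobSq, Fin.sum_univ_two] <;>
      simp [Matrix.one_apply, inv_mul_cancel₀ hβc, abs_of_pos hβ0, habs, ← ht,
        norm_neg] <;>
      rw [mul_pow, inv_pow] <;> ring
  refine ⟨hmain, ?_⟩
  -- inequality
  have hv : frobSq (C - 1) ≤ (1.1 * t) ^ 2 := by
    rw [hmain]
    have h1β : 0 ≤ 1 - β := by linarith
    have h2 : 0 ≤ 1.21 * (1 + β) * β ^ 2 - 2 := by nlinarith
    have hβ2 : (0:ℝ) < β ^ 2 := by positivity
    have key : (1 / β - 1) ^ 2 + t ^ 2 / β ^ 2 ≤ 1.21 * t ^ 2 := by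
      rw [div_sub' hβ0.ne', div_pow, div_add_div _ _ (by positivity) hβ2.ne',
        div_le_iff₀ (by positivity)]
      nlinarith [mul_nonneg h1β h2, sq_nonneg β]
    calc (1 / β - 1) ^ 2 + t ^ 2 / β ^ 2 ≤ 1.21 * t ^ 2 := key
      _ = (1.1 * t) ^ 2 := by ring
  calc Real.sqrt (frobSq (C - 1)) ≤ Real.sqrt ((1.1 * t) ^ 2) := Real.sqrt_le_sqrt hv
    _ = 1.1 * t := Real.sqrt_sq (by positivity)
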